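/- Let r ≥ 1 be an integer and {f_n}_{n≥0} an arbitrary nonnegative real sequence. Then for every μ > 0, every α, β > 0, and every integer m ≥ 0, Σ_{k=0}^{m} f_k f_{m−k} [ 1/( (μ+α)_{rk} (μ+β)_{r(m−k)} ) − 1/( (μ)_{rk} (μ+α+β)_{r(m−k)} ) ] ≤ 0. In other words, the formal power series μ ↦ Σ_{n≥0} f_n x^n/(μ)_{rn} is coefficient-wise log-convex. -/

import Mathlib

/-- The rising factorial (Pochhammer symbol) `(μ)_n = μ(μ+1)⋯(μ+n−1)`. -/
noncomputable def risingFactorial (μ : ℝ) : ℕ → ℝ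
  | 0 => 1
  | n + 1 => risingFactorial μ n * (μ + n)

lemma rf_pos (x : ℝ) (hx : 0 < x) : ∀ n, 0 < risingFactorial x n
  | 0 => one_pos
  | n + 1 => mul_pos (rf_pos x hx n) (by positivity)

lemma rf_le {x y : ℝ} (hx : 0 < x) (hxy : x ≤ y) :
    ∀ n, risingFactorial x n ≤ risingFactorial y n
  | 0 => le_refl 1
  | n + 1 => by
    have ih := rf_le hx hxy n
    have p1 := rf_pos x hx n
    simp only [risingFactorial]
    exact mul_le_mul ih (by linarith) (by positivity) (p1.le.trans ih)

lemma rf_add (x : ℝ) (a : ℕ) :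
    ∀ c, risingFactorial x (a + c) = risingFactorial x a * risingFactorial (x + a) c
  | 0 => by simp [risingFactorial]
  | c + 1 => by
    show risingFactorial x (a + c + 1) = _
    simp only [risingFactorial, rf_add x a c]
    push_cast
    ring

lemma rf_pair {x u v w : ℝ} (hx : 0 < x) (hu : x ≤ u) (hv : x ≤ v) (hw : u + v = x + w) :
    ∀ n, risingFactorial x n * risingFactorial w n ≤ risingFactorial u n * risingFactorial v n
  | 0 => by simp [risingFactorial]
  | n + 1 => by
    have ih := rf_pair hx hu hv hw n
    have hwpos : 0 < w := by nlinarith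
    have hupos : 0 < u := lt_of_lt_of_le hx hu
    have hvpos : 0 < v := lt_of_lt_of_le hx hv
    have p1 := rf_pos x hx n
    have p2 := rf_pos w hwpos n
    have p3 := rf_pos u hupos n
    have p4 := rf_pos v hvpos n
    have hfac : (x + n) * (w + n) ≤ (u + n) * (v + n) := by
      nlinarith [mul_nonneg (sub_nonneg.2 hu) (sub_nonneg.2 hv)]
    simp only [risingFactorial]
    nlinarith [mul_le_mul ih hfac (by positivity) (mul_pos p3 p4).le]

lemma rf_diff {x y u v : ℝ} (hx : 0 < x) (hxy : x ≤ y) (hxu : x ≤ u) (huv : u + y = x + v) :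
    ∀ n, risingFactorial u n - risingFactorial x n ≤ risingFactorial v n - risingFactorial y n := by
  obtain rfl : v = u + y - x := by linarith
  intro n
  induction n with
  | zero => simp [risingFactorial]
  | succ n ih =>
    have hy : 0 < y := lt_of_lt_of_le hx hxy
    have hu : 0 < u := lt_of_lt_of_le hx hxu
    have hv : 0 < u + y - x := by linarith
    have h2 : risingFactorial x n ≤ risingFactorial u n := rf_le hx hxu n
    have h3 : risingFactorial u n ≤ risingFactorial (u + y - x) n := rf_le hu (by linarith) n
    simp only [risingFactorial]
    nlinarith [mul_le_mul_of_nonneg_right ih (by positivity : (0:ℝ) ≤ y + n),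
      mul_nonneg (sub_nonneg.2 h2) (sub_nonneg.2 hxy),
      mul_nonneg (sub_nonneg.2 hxu) (sub_nonneg.2 h3)]

lemma recip_ineq (A B C D p q s t : ℝ) (hA : 0 < A) (hB : 0 < B) (hC : 0 < C) (hD : 0 < D)
    (hp : 0 < p) (hq : 0 < q) (hs : 0 < s) (ht : 0 < t)
    (hCD : C * D ≤ A * B) (hpt : p * t ≤ q * s) (hqs : q + s ≤ p + t) :
    1 / (A * (B * s)) + 1 / ((A * q) * B) ≤ 1 / (C * (D * t)) + 1 / ((C * p) * D) := by
  have K : (C * D) * ((q + s) * (p * t)) ≤ (A * B) * ((p + t) * (q * s)) :=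
    mul_le_mul hCD (mul_le_mul hqs hpt (by positivity) (by positivity))
      (by positivity) (by positivity)
  rw [div_add_div _ _ (by positivity) (by positivity),
    div_add_div _ _ (by positivity) (by positivity),
    div_le_div_iff₀ (by positivity) (by positivity)]
  nlinarith [mul_le_mul_of_nonneg_right K (by positivity : (0:ℝ) ≤ A * B * C * D)]

lemma pair_core (μ α β : ℝ) (hμ : 0 < μ) (hα : 0 ≤ α) (hαβ : α ≤ β) (a b : ℕ) (hab : a ≤ b) :
    1 / (risingFactorial (μ + α) a * risingFactorial (μ + β) b)
      + 1 / (risingFactorial (μ + α) b * risingFactorial (μ + β) a) ≤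
    1 / (risingFactorial μ a * risingFactorial (μ + α + β) b)
      + 1 / (risingFactorial μ b * risingFactorial (μ + α + β) a) := by
  obtain ⟨c, rfl⟩ := Nat.exists_eq_add_of_le hab
  have hβ0 : 0 ≤ β := hα.trans hαβ
  rw [rf_add (μ + β) a c, rf_add (μ + α) a c, rf_add (μ + α + β) a c, rf_add μ a c]
  refine recip_ineq (risingFactorial (μ + α) a) (risingFactorial (μ + β) a)
    (risingFactorial μ a) (risingFactorial (μ + α + β) a)
    (risingFactorial (μ + ↑a) c) (risingFactorial (μ + α + ↑a) c)
    (risingFactorial (μ + β + ↑a) c) (risingFactorial (μ + α + β + ↑a) c)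
    (rf_pos _ (by linarith) a) (rf_pos _ (by linarith) a) (rf_pos _ hμ a)
    (rf_pos _ (by linarith) a)
    (rf_pos _ (by positivity) c) (rf_pos _ (by positivity) c)
    (rf_pos _ (by positivity) c) (rf_pos _ (by positivity) c)
    (rf_pair hμ (by linarith) (by linarith) (by ring) a)
    (rf_pair (by positivity : (0:ℝ) < μ + ↑a) (by simp; linarith) (by simp; linarith)
      (by ring) c)
    ?_
  have := rf_diff (x := μ + ↑a) (y := μ + β + ↑a) (u := μ + α + ↑a) (v := μ + α + β + ↑a)
    (by positivity) (by linarith) (by linarith) (by ring) c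
  linarith

lemma pair_ab (μ α β : ℝ) (hμ : 0 < μ) (hα : 0 ≤ α) (hβ : 0 ≤ β) (a b : ℕ) (hab : a ≤ b) :
    1 / (risingFactorial (μ + α) a * risingFactorial (μ + β) b)
      + 1 / (risingFactorial (μ + α) b * risingFactorial (μ + β) a) ≤
    1 / (risingFactorial μ a * risingFactorial (μ + α + β) b)
      + 1 / (risingFactorial μ b * risingFactorial (μ + α + β) a) := by
  rcases le_total α β with h | h
  · exact pair_core μ α β hμ hα h a b hab
  · have H := pair_core μ β α hμ hβ h a b hab
    rw [show μ + β + α = μ + α + β by ring,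
      mul_comm (risingFactorial (μ + β) a) (risingFactorial (μ + α) b),
      mul_comm (risingFactorial (μ + β) b) (risingFactorial (μ + α) a)] at H
    linarith

lemma pair (μ α β : ℝ) (hμ : 0 < μ) (hα : 0 ≤ α) (hβ : 0 ≤ β) (a b : ℕ) :
    1 / (risingFactorial (μ + α) a * risingFactorial (μ + β) b)
      + 1 / (risingFactorial (μ + α) b * risingFactorial (μ + β) a) ≤
    1 / (risingFactorial μ a * risingFactorial (μ + α + β) b)
      + 1 / (risingFactorial μ b * risingFactorial (μ + α + β) a) := by
  rcases le_total a b with h | h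
  · exact pair_ab μ α β hμ hα hβ a b h
  · have H := pair_ab μ α β hμ hα hβ b a h
    linarith

theorem stmt_12 (r : ℕ) (hr : 1 ≤ r) (f : ℕ → ℝ) (hf : ∀ n, 0 ≤ f n)
    (μ α β : ℝ) (hμ : 0 < μ) (hα : 0 < α) (hβ : 0 < β) (m : ℕ) :
    ∑ k ∈ Finset.range (m + 1), f k * f (m - k) *
      (1 / (risingFactorial (μ + α) (r * k) * risingFactorial (μ + β) (r * (m - k)))
        - 1 / (risingFactorial μ (r * k) * risingFactorial (μ + α + β) (r * (m - k)))) ≤ 0 := by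
  set g : ℕ → ℝ := fun k => f k * f (m - k) *
      (1 / (risingFactorial (μ + α) (r * k) * risingFactorial (μ + β) (r * (m - k)))
        - 1 / (risingFactorial μ (r * k) * risingFactorial (μ + α + β) (r * (m - k)))) with hg
  have hsum : ∑ k ∈ Finset.range (m + 1), g (m - k) = ∑ k ∈ Finset.range (m + 1), g k := by
    have := Finset.sum_range_reflect g (m + 1)
    simpa using this
  have h2 : ∑ k ∈ Finset.range (m + 1), (g k + g (m - k)) ≤ 0 := by
    apply Finset.sum_nonpos
    intro k hk
    have hk' : k ≤ m := Nat.lt_succ_iff.mp (Finset.mem_range.mp hk)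
    have hks : m - (m - k) = k := Nat.sub_sub_self hk'
    have hpair := pair μ α β hμ hα.le hβ.le (r * k) (r * (m - k))
    have heq : g k + g (m - k) = f k * f (m - k) *
        ((1 / (risingFactorial (μ + α) (r * k) * risingFactorial (μ + β) (r * (m - k)))
          + 1 / (risingFactorial (μ + α) (r * (m - k)) * risingFactorial (μ + β) (r * k)))
        - (1 / (risingFactorial μ (r * k) * risingFactorial (μ + α + β) (r * (m - k)))
          + 1 / (risingFactorial μ (r * (m - k)) * risingFactorial (μ + α + β) (r * k)))) := by
      simp only [hg, hks]
      ring
    rw [heq]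
    exact mul_nonpos_of_nonneg_of_nonpos (mul_nonneg (hf k) (hf (m - k))) (by linarith)
  have h3 : ∑ k ∈ Finset.range (m + 1), (g k + g (m - k))
      = (∑ k ∈ Finset.range (m + 1), g k) + (∑ k ∈ Finset.range (m + 1), g k) := by
    rw [Finset.sum_add_distrib, hsum]
  linarith [h3 ▸ h2]
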